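/- Let d ≥ 1, let B be a real symmetric positive semidefinite d×d matrix, and let b ∈ ℝ^d with b ∈ Range(B). Let Y ∈ ℝ^d be any vector with BY = b (the scalar b·Y is independent of the choice of Y) and assume 4 − b·Y > 0. Then there exists a constant c > 0 such that for every X ∈ ℝ^d, 1 + b·X + X·BX ≥ c(1 + (b·X)²). -/

import Mathlib

open Matrix
/- STATEMENT 9: coercivity of the symbol `1 + b·X + X·BX` of the operator
`1 - iε b·∇ - ε²∇·B∇`: if `B` is real symmetric positive semidefinite, `b = BY` lies in
the range of `B`, and `4 - b·Y > 0`, then there is `c > 0` with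
`1 + b·X + X·BX ≥ c (1 + (b·X)²)` for all `X`. -/
theorem improved_dispersion_symbol_coercive
    (d : ℕ) (hd : 1 ≤ d)
    (B : Matrix (Fin d) (Fin d) ℝ)
    (hBsym : B.IsSymm) (hBpos : B.PosSemidef)
    (b Y : Fin d → ℝ)
    (hbY : B.mulVec Y = b)
    (h4 : 0 < 4 - b ⬝ᵥ Y) :
    ∃ c > 0, ∀ X : Fin d → ℝ,
      c * (1 + (b ⬝ᵥ X) ^ 2) ≤ 1 + b ⬝ᵥ X + X ⬝ᵥ B.mulVec X := by
  have hsym : ∀ x y : Fin d → ℝ, x ⬝ᵥ B.mulVec y = (B.mulVec x) ⬝ᵥ y := by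
    intro x y
    rw [Matrix.dotProduct_mulVec, ← Matrix.mulVec_transpose, hBsym.eq]
  have hpos : ∀ x : Fin d → ℝ, 0 ≤ x ⬝ᵥ B.mulVec x := by
    intro x
    simpa using hBpos.dotProduct_mulVec_nonneg x
  set α := b ⬝ᵥ Y with hα
  have hα0 : 0 ≤ α := by
    have := hpos Y
    rwa [hbY, dotProduct_comm] at this
  set a := max α 1 with ha
  have ha1 : 1 ≤ a := le_max_right _ _
  have ha0 : 0 < a := by linarith
  have haα : α ≤ a := le_max_left _ _
  have ha4 : a < 4 := max_lt (by linarith) (by norm_num)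
  clear_value a
  -- Cauchy-Schwarz type bound: (b⬝ᵥX)² ≤ a * (X ⬝ᵥ B X)
  have hCS : ∀ X : Fin d → ℝ, (b ⬝ᵥ X) ^ 2 ≤ a * (X ⬝ᵥ B.mulVec X) := by
    intro X
    set t := b ⬝ᵥ X with ht
    set q := X ⬝ᵥ B.mulVec X with hq
    clear_value t q
    have hq0 : 0 ≤ q := hq ▸ hpos X
    have hexp : 0 ≤ q + 2 * (-t/a) * t + (-t/a)^2 * α := by
      have h0 := hpos (X + (-t/a) • Y)
      have e1 : Y ⬝ᵥ B.mulVec X = t := by rw [hsym, hbY, ht]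
      have e2 : X ⬝ᵥ B.mulVec Y = t := by rw [hbY, ht, dotProduct_comm]
      have e3 : Y ⬝ᵥ B.mulVec Y = α := by rw [hbY, hα, dotProduct_comm]
      simp only [add_dotProduct, dotProduct_add, Matrix.mulVec_add,
        Matrix.mulVec_smul, smul_dotProduct, dotProduct_smul,
        smul_eq_mul, e1, e2, e3] at h0
      nlinarith [h0]
    have key : 0 ≤ q * a^2 - 2 * t^2 * a + t^2 * α := by
      have hne : a ≠ 0 := ne_of_gt ha0
      have heq : (q + 2 * (-t/a) * t + (-t/a)^2 * α) * a^2
          = q * a^2 - 2 * t^2 * a + t^2 * α := by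
        field_simp
        ring
      have := mul_nonneg hexp (sq_nonneg a)
      rwa [heq] at this
    nlinarith [key, mul_nonneg (sq_nonneg t) (sub_nonneg.mpr haα), hq0, sq_nonneg t]
  -- pick constants
  set ε : ℝ := (1/4 + 1/a) / 2 with hε
  have hainv : 1/4 < 1/a := by
    rw [div_lt_div_iff₀ (by norm_num) ha0]; linarith
  have hε14 : 1/4 < ε := by rw [hε]; linarith
  have hεa : ε < 1/a := by rw [hε]; linarith
  have hε0 : 0 < ε := by linarith
  clear_value ε
  set c : ℝ := min (1 - 1/(4*ε)) (1/a - ε) with hc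
  have hc1 : c ≤ 1 - 1/(4*ε) := min_le_left _ _
  have hc2 : c ≤ 1/a - ε := min_le_right _ _
  clear_value c
  have hcpos : 0 < c := by
    rw [hc]
    apply lt_min
    · have : 1/(4*ε) < 1 := by
        rw [div_lt_one (by linarith)]; linarith
      linarith
    · linarith
  refine ⟨c, hcpos, fun X => ?_⟩
  have hCSX := hCS X
  have hq0 := hpos X
  set t := b ⬝ᵥ X with htdef
  set q := X ⬝ᵥ B.mulVec X with hqdef
  clear_value t q
  have hsq : 0 ≤ ε * t^2 + t + 1/(4*ε) := by
    have h1 : (ε*t^2 + t + 1/(4*ε)) * (4*ε) = 4*ε^2*t^2 + 4*ε*t + 1 := by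
      field_simp
    have hkey : 0 ≤ (ε*t^2 + t + 1/(4*ε)) * (4*ε) := by
      rw [h1]; nlinarith [sq_nonneg (2*ε*t+1)]
    nlinarith [hkey, hε0]
  have hca : (c + ε) * a ≤ 1 := by
    have h := mul_le_mul_of_nonneg_right (by linarith : c + ε ≤ 1/a) ha0.le
    rwa [one_div_mul_cancel (ne_of_gt ha0)] at h
  have hA : (c + ε) * t^2 ≤ (c + ε) * (a * q) :=
    mul_le_mul_of_nonneg_left hCSX (by linarith)
  have hB : (c + ε) * (a * q) ≤ q := by
    have h := mul_le_mul_of_nonneg_right hca hq0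
    calc (c + ε) * (a * q) = ((c + ε) * a) * q := by ring
      _ ≤ 1 * q := h
      _ = q := one_mul q
  have hAB := hA.trans hB
  linarith only [hAB, hsq, hc1]
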